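/- (Explicit expression for the differential of the development layer output.) Fix d, m, N ∈ ℕ, a sequence x = (x_0, …, x_N) in ℝ^d with increments Δx_i := x_i − x_{i−1}. For every θ, every ξ = (ξ_1, …, ξ_d) ∈ (Matrix (Fin m) (Fin m) ℝ)^d, and every 1 ≤ n ≤ N: fderiv ℝ z_n θ (ξ) = Σ_{i=1}^n z_{i−1}(θ) * (d exp)_{M_θ(Δx_i)}(M_ξ(Δx_i)) * (exp(M_θ(Δx_{i+1})) ⋯ exp(M_θ(Δx_n))), where the trailing ordered product is the identity matrix when i = n and M_ξ(v) := Σ_{j=1}^d v^{(j)} • ξ_j. -/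

import Mathlib

attribute [local instance] Matrix.linftyOpNormedAddCommGroup Matrix.linftyOpNormedRing
  Matrix.linftyOpNormedAlgebra

/-- `M_θ v = ∑ j, v j • θ j`, the trainable linear map of the development layer. -/
noncomputable def devLayerM (d m : ℕ) (θ : Fin d → Matrix (Fin m) (Fin m) ℝ)
    (v : Fin d → ℝ) : Matrix (Fin m) (Fin m) ℝ :=
  ∑ j, v j • θ j

/-- The development layer output `z_n (θ) = exp (M_θ Δx_1) * ⋯ * exp (M_θ Δx_n)`
(ordered product, `z_0 = 1`), where `Δx_i = x i - x (i-1)`. -/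
noncomputable def devLayerZ (d m : ℕ) (x : ℕ → Fin d → ℝ) (n : ℕ)
    (θ : Fin d → Matrix (Fin m) (Fin m) ℝ) : Matrix (Fin m) (Fin m) ℝ :=
  ((List.range n).map
    (fun i => NormedSpace.exp (devLayerM d m θ (x (i + 1) - x i)))).prod

/-- The map `θ ↦ M_θ v` as a continuous linear map. -/
noncomputable def devLayerMCLM (d m : ℕ) (v : Fin d → ℝ) :
    (Fin d → Matrix (Fin m) (Fin m) ℝ) →L[ℝ] Matrix (Fin m) (Fin m) ℝ :=
  ∑ j, v j • (ContinuousLinearMap.proj j)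

lemma devLayerMCLM_apply (d m : ℕ) (v : Fin d → ℝ)
    (θ : Fin d → Matrix (Fin m) (Fin m) ℝ) :
    devLayerMCLM d m v θ = devLayerM d m θ v := by
  simp [devLayerMCLM, devLayerM, ContinuousLinearMap.sum_apply]

lemma devLayerM_hasFDerivAt (d m : ℕ) (v : Fin d → ℝ)
    (θ : Fin d → Matrix (Fin m) (Fin m) ℝ) :
    HasFDerivAt (fun θ => devLayerM d m θ v) (devLayerMCLM d m v) θ := by
  have : (fun θ : Fin d → Matrix (Fin m) (Fin m) ℝ => devLayerM d m θ v) =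
      devLayerMCLM d m v := by
    funext θ; exact (devLayerMCLM_apply d m v θ).symm
  rw [this]
  exact (devLayerMCLM d m v).hasFDerivAt

lemma devLayerZ_key (d m : ℕ) (x : ℕ → Fin d → ℝ)
    (θ : Fin d → Matrix (Fin m) (Fin m) ℝ) (n : ℕ) :
    ∃ L : (Fin d → Matrix (Fin m) (Fin m) ℝ) →L[ℝ] Matrix (Fin m) (Fin m) ℝ,
      HasFDerivAt (devLayerZ d m x n) L θ ∧
      ∀ ξ, L ξ =
        ∑ i ∈ Finset.range n,
          devLayerZ d m x i θ *
            fderiv ℝ (NormedSpace.exp) (devLayerM d m θ (x (i + 1) - x i))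
              (devLayerM d m ξ (x (i + 1) - x i)) *
            ((List.range (n - (i + 1))).map
              (fun j => NormedSpace.exp
                (devLayerM d m θ (x (i + 1 + j + 1) - x (i + 1 + j))))).prod := by
  induction n with
  | zero =>
    refine ⟨0, ?_, ?_⟩
    · have : devLayerZ d m x 0 = fun _ => (1 : Matrix (Fin m) (Fin m) ℝ) := by
        funext θ; simp [devLayerZ]
      rw [this]
      exact hasFDerivAt_const _ _
    · intro ξ; simp
  | succ n ih =>
    obtain ⟨L, hL, hval⟩ := ih
    set v : Fin d → ℝ := x (n + 1) - x n with hv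
    -- derivative of θ ↦ exp (M_θ v)
    have hexp : DifferentiableAt ℝ (NormedSpace.exp)
        (devLayerM d m θ v) :=
      (NormedSpace.exp_analytic _).differentiableAt
    have hD : HasFDerivAt (fun θ => NormedSpace.exp (devLayerM d m θ v))
        ((fderiv ℝ (NormedSpace.exp) (devLayerM d m θ v)).comp
          (devLayerMCLM d m v)) θ :=
      hexp.hasFDerivAt.comp θ (devLayerM_hasFDerivAt d m v θ)
    have hsplit : devLayerZ d m x (n + 1) =
        fun θ => devLayerZ d m x n θ * NormedSpace.exp (devLayerM d m θ v) := by
      funext θ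
      simp [devLayerZ, List.range_succ, hv]
    have hmul : HasFDerivAt (fun θ => devLayerZ d m x n θ * NormedSpace.exp (devLayerM d m θ v)) _ θ :=
      hL.mul' hD
    rw [← hsplit] at hmul
    refine ⟨_, hmul, ?_⟩
    intro ξ
    have happ : (devLayerZ d m x n θ •
          ((fderiv ℝ (NormedSpace.exp) (devLayerM d m θ v)).comp
            (devLayerMCLM d m v)) +
        MulOpposite.op (NormedSpace.exp (devLayerM d m θ v)) • L) ξ =
        devLayerZ d m x n θ *
          (fderiv ℝ (NormedSpace.exp) (devLayerM d m θ v))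
            (devLayerM d m ξ v) +
        L ξ * NormedSpace.exp (devLayerM d m θ v) := by
      simp [ContinuousLinearMap.add_apply, ContinuousLinearMap.smul_apply,
        ContinuousLinearMap.comp_apply, ContinuousLinearMap.smulRight_apply,
        devLayerMCLM_apply, smul_eq_mul, op_smul_eq_mul]
    refine happ.trans ?_
    rw [hval ξ, Finset.sum_range_succ]
    have htail : ∀ i ∈ Finset.range n,
        devLayerZ d m x i θ *
          fderiv ℝ (NormedSpace.exp) (devLayerM d m θ (x (i + 1) - x i))
            (devLayerM d m ξ (x (i + 1) - x i)) *
          ((List.range (n + 1 - (i + 1))).map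
            (fun j => NormedSpace.exp
              (devLayerM d m θ (x (i + 1 + j + 1) - x (i + 1 + j))))).prod =
        devLayerZ d m x i θ *
          fderiv ℝ (NormedSpace.exp) (devLayerM d m θ (x (i + 1) - x i))
            (devLayerM d m ξ (x (i + 1) - x i)) *
          ((List.range (n - (i + 1))).map
            (fun j => NormedSpace.exp
              (devLayerM d m θ (x (i + 1 + j + 1) - x (i + 1 + j))))).prod *
          NormedSpace.exp (devLayerM d m θ v) := by
      intro i hi
      rw [Finset.mem_range] at hi
      have h1 : n + 1 - (i + 1) = (n - (i + 1)) + 1 := by omega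
      have h2 : i + 1 + (n - (i + 1)) = n := by omega
      rw [h1, List.range_succ, List.map_append, List.prod_append]
      simp only [List.map_singleton, List.prod_singleton]
      rw [h2]
      simp [mul_assoc, hv]
    rw [Finset.sum_congr rfl htail, ← Finset.sum_mul]
    have hlast : n + 1 - (n + 1) = 0 := by omega
    rw [hlast]
    simp [hv, add_comm]
  done

/-- Explicit expression for the differential of the development layer output:
`(d z_n)_θ ξ = ∑_{i=1}^n z_{i-1}(θ) * (d exp)_{M_θ Δx_i} (M_ξ Δx_i) *
(exp (M_θ Δx_{i+1}) ⋯ exp (M_θ Δx_n))`, where the trailing ordered product is the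
identity matrix when `i = n`.  (Below the summation index `i` runs over `0, …, n-1`
and corresponds to the step `i+1`, with `Δx_{i+1} = x (i+1) - x i`.) -/
theorem statement12 (d m N : ℕ) (x : ℕ → Fin d → ℝ)
    (θ ξ : Fin d → Matrix (Fin m) (Fin m) ℝ) (n : ℕ) (h1 : 1 ≤ n) (hN : n ≤ N) :
    fderiv ℝ (devLayerZ d m x n) θ ξ =
      ∑ i ∈ Finset.range n,
        devLayerZ d m x i θ *
          fderiv ℝ (NormedSpace.exp) (devLayerM d m θ (x (i + 1) - x i))
            (devLayerM d m ξ (x (i + 1) - x i)) *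
          ((List.range (n - (i + 1))).map
            (fun j => NormedSpace.exp
              (devLayerM d m θ (x (i + 1 + j + 1) - x (i + 1 + j))))).prod := by
  obtain ⟨L, hL, hval⟩ := devLayerZ_key d m x θ n
  rw [hL.fderiv]
  exact hval ξ
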